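/- For any finite type σ over Ω and any sequence of countable ordinals (α_ξ)_{ξ<ζ} indexed by a countable ordinal ζ ≥ 1, if μ < ζ is such that limsup_{ξ→ζ} α_ξ = sup_{μ≤ξ<ζ} α_ξ, then limsup_{ξ→ζ} Iter_{α_ξ}^σ =hp sup_{μ≤ξ<ζ} Iter_{α_ξ}^σ. -/

import Mathlib

/-!  Framework: finite type structure over Ω = countable ordinals,
     limsup/liminf, transfinite iteration functionals, hereditarily
     positive and hereditarily monotone functionals. -/

noncomputable section
namespace IterOrd

open Ordinal

theorem omega1_pos : (0 : Ordinal) < ω₁ := Ordinal.omega0_pos.trans Ordinal.omega0_lt_omega_one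

/-- `Om` is Ω, the set of countable ordinals (ordinals `< ω₁`). -/
abbrev Om : Type 1 := {o : Ordinal // o < ω₁}

/-- Infimum of a subset of Ω (the minimum for nonempty sets; `0` for `∅`). -/
def infOm (s : Set Om) : Om :=
  ⟨sInf (Subtype.val '' s), by
    rcases (Subtype.val '' s).eq_empty_or_nonempty with h | h
    · rw [h]; simpa using omega1_pos
    · obtain ⟨x, _, he⟩ := csInf_mem h
      exact he ▸ x.2⟩

/-- Supremum of a subset of Ω.  Whenever the supremum of the set exists in Ω
(in particular for every countable subset, by regularity of `ω₁`) this is the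
genuine supremum; otherwise it takes a junk value. -/
def supOm (s : Set Om) : Om :=
  if h : sSup (Subtype.val '' s) < ω₁ then ⟨sSup (Subtype.val '' s), h⟩ else ⟨0, omega1_pos⟩

/-- Finite types over the base type `o` (interpreted as Ω). -/
inductive Ty : Type
  | base : Ty
  | arrow : Ty → Ty → Ty
deriving DecidableEq

/-- The full type structure over Ω: `El base = Ω` and
`El (arrow σ τ)` is the set of all functions `El σ → El τ`. -/
@[reducible] def El : Ty → Type 1
  | .base => Om
  | .arrow σ τ => El σ → El τ

/-- The order on each `El σ`: the ordinal order at base type, pointwise at arrow types. -/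
def Le : (σ : Ty) → El σ → El σ → Prop
  | .base => fun x y => x ≤ y
  | .arrow σ τ => fun f g => ∀ x : El σ, Le τ (f x) (g x)

/-- Suprema, computed pointwise at function types. -/
def supEl : (σ : Ty) → Set (El σ) → El σ
  | .base => supOm
  | .arrow σ τ => fun S (x : El σ) => supEl τ ((fun f : El (.arrow σ τ) => f x) '' S)

/-- Infima, computed pointwise at function types. -/
def infEl : (σ : Ty) → Set (El σ) → El σ
  | .base => infOm
  | .arrow σ τ => fun S (x : El σ) => infEl τ ((fun f : El (.arrow σ τ) => f x) '' S)

/-- `limsup_{ξ→ζ} f ξ = inf_{γ<ζ} sup_{γ≤ξ<ζ} f ξ`. -/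
def limsupEl (σ : Ty) (ζ : Ordinal) (f : ∀ ξ : Ordinal, ξ < ζ → El σ) : El σ :=
  infEl σ {y | ∃ γ, ∃ _ : γ < ζ, y = supEl σ {z | ∃ ξ, ∃ h : ξ < ζ, γ ≤ ξ ∧ z = f ξ h}}

/-- `liminf_{ξ→ζ} f ξ = sup_{γ<ζ} inf_{γ≤ξ<ζ} f ξ`. -/
def liminfEl (σ : Ty) (ζ : Ordinal) (f : ∀ ξ : Ordinal, ξ < ζ → El σ) : El σ :=
  supEl σ {y | ∃ γ, ∃ _ : γ < ζ, y = infEl σ {z | ∃ ξ, ∃ h : ξ < ζ, γ ≤ ξ ∧ z = f ξ h}}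

/-- `limsup` of a ζ-indexed sequence of ordinals. -/
def oLimsup (ζ : Ordinal) (a : Ordinal → Ordinal) : Ordinal :=
  sInf {s | ∃ γ, γ < ζ ∧ s = sSup (a '' {ξ | γ ≤ ξ ∧ ξ < ζ})}

/-- `liminf` of a ζ-indexed sequence of ordinals. -/
def oLiminf (ζ : Ordinal) (a : Ordinal → Ordinal) : Ordinal :=
  sSup {s | ∃ γ, γ < ζ ∧ s = sInf (a '' {ξ | γ ≤ ξ ∧ ξ < ζ})}

/-- The α-iteration functional of type σ:
`Iter 0 f x = x`, `Iter (α+1) f x = f (Iter α f x)`, and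
`Iter μ f x = limsup_{ξ→μ} Iter ξ f x` for limit μ. -/
def Iter (σ : Ty) (α : Ordinal) : (El σ → El σ) → El σ → El σ :=
  Ordinal.limitRecOn (motive := fun _ => (El σ → El σ) → El σ → El σ) α
    (fun _ x => x)
    (fun _ ih f x => f (ih f x))
    (fun μ _ ih f x => limsupEl σ μ (fun ξ h => ih ξ h f x))

/-- The pair (hereditarily positive, ≤hp), defined simultaneously by recursion on the type.
Every element of `Ω` and of `Ω_{ρ→τ}` with `ρ ≠ τ` is h.p., and `≤hp` there is `≤`;
`f : Ω_{τ→τ}` is h.p. iff it preserves h.p., is inflationary on h.p. arguments and is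
monotone (w.r.t. `≤hp`) on h.p. arguments; `f ≤hp f'` on `Ω_{τ→τ}` iff `f x ≤hp f' x`
for every h.p. `x`. -/
def HPaux : (σ : Ty) → (El σ → Prop) × (El σ → El σ → Prop)
  | .base => ⟨fun _ => True, fun x y => x ≤ y⟩
  | .arrow ρ τ =>
      ⟨fun f =>
        if h : ρ = τ then
          (∀ x, (HPaux ρ).1 x → (HPaux τ).1 (f x)) ∧
          (∀ x, (HPaux ρ).1 x → (HPaux τ).2 (cast (congrArg El h) x) (f x)) ∧
          (∀ x y, (HPaux ρ).1 x → (HPaux ρ).1 y → (HPaux ρ).2 x y → (HPaux τ).2 (f x) (f y))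
        else True,
       fun f g =>
        if ρ = τ then ∀ x, (HPaux ρ).1 x → (HPaux τ).2 (f x) (g x)
        else Le (.arrow ρ τ) f g⟩

/-- Hereditarily positive functionals. -/
def Hp (σ : Ty) : El σ → Prop := (HPaux σ).1

/-- The order `≤hp`. -/
def HpLe (σ : Ty) : El σ → El σ → Prop := (HPaux σ).2

/-- `f =hp g` iff `f ≤hp g` and `g ≤hp f`. -/
def HpEq (σ : Ty) (f g : El σ) : Prop := HpLe σ f g ∧ HpLe σ g f

/-- The pair (hereditarily monotone, ≤ on the hereditarily monotone structure),
by recursion on the type.  `f` is hereditarily monotone iff it maps hereditarily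
monotone arguments to hereditarily monotone values, monotonically; the order is
pointwise over hereditarily monotone arguments (i.e. the order of `Ω^mon`). -/
def HMaux : (σ : Ty) → (El σ → Prop) × (El σ → El σ → Prop)
  | .base => ⟨fun _ => True, fun x y => x ≤ y⟩
  | .arrow σ τ =>
      ⟨fun f =>
        (∀ x, (HMaux σ).1 x → (HMaux τ).1 (f x)) ∧
        (∀ x y, (HMaux σ).1 x → (HMaux σ).1 y → (HMaux σ).2 x y → (HMaux τ).2 (f x) (f y)),
       fun f g => ∀ x, (HMaux σ).1 x → (HMaux τ).2 (f x) (g x)⟩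

/-- Hereditarily monotone functionals: the members of the type structure `Ω^mon`. -/
def HM (σ : Ty) : El σ → Prop := (HMaux σ).1

/-- The (pointwise) order of the hereditarily monotone type structure `Ω^mon`. -/
def LeHM (σ : Ty) : El σ → El σ → Prop := (HMaux σ).2

/-- Equality in the hereditarily monotone type structure `Ω^mon`. -/
def EqHM (σ : Ty) (f g : El σ) : Prop := LeHM σ f g ∧ LeHM σ g f


/-! ## Auxiliary lemmas -/

open Cardinal in
theorem sSup_lt_omega1 (A : Set Ordinal) (hA : A.Countable) (h : ∀ a ∈ A, a < ω₁) :
    sSup A < ω₁ := by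
  rcases A.eq_empty_or_nonempty with rfl | hne
  · simpa using omega1_pos
  · obtain ⟨g, rfl⟩ := hA.exists_eq_range hne
    rw [sSup_range]
    exact Ordinal.iSup_lt_omega_one (fun n => h _ ⟨n, rfl⟩)

theorem countable_Iio {ζ : Ordinal} (hζ : ζ < ω₁) : (Set.Iio ζ).Countable := by
  rw [Cardinal.countable_iff_lt_aleph_one, Ordinal.mk_Iio_ordinal, Cardinal.lift_lt_aleph_one]
  rwa [← Cardinal.lt_ord, Cardinal.ord_aleph]

theorem countable_seg (γ : Ordinal) {ζ : Ordinal} (hζ : ζ < ω₁) :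
    {ξ : Ordinal | γ ≤ ξ ∧ ξ < ζ}.Countable :=
  (countable_Iio hζ).mono fun _ h => h.2

theorem Om.le_def {x y : Om} : x ≤ y ↔ x.1 ≤ y.1 := Iff.rfl

theorem bddAbove_om (s : Set Om) : BddAbove (Subtype.val '' s) :=
  ⟨ω₁, by rintro _ ⟨y, _, rfl⟩; exact y.2.le⟩

/-! ### `Om` sup/inf lemmas -/

theorem supOm_lt {s : Set Om} (hs : s.Countable) : sSup (Subtype.val '' s) < ω₁ :=
  sSup_lt_omega1 _ (hs.image _) (by rintro _ ⟨y, _, rfl⟩; exact y.2)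

theorem le_supOm {s : Set Om} (hs : s.Countable) {x : Om} (hx : x ∈ s) : x ≤ supOm s := by
  rw [supOm, dif_pos (supOm_lt hs), Om.le_def]
  exact le_csSup (bddAbove_om s) ⟨x, hx, rfl⟩

theorem supOm_le {s : Set Om} {b : Om} (hb : ∀ x ∈ s, x ≤ b) : supOm s ≤ b := by
  rw [supOm]
  split
  · rw [Om.le_def]
    exact csSup_le' (by rintro _ ⟨y, hy, rfl⟩; exact (Om.le_def).1 (hb y hy))
  · exact (Om.le_def).2 (show (0 : Ordinal) ≤ b.1 from zero_le)

theorem infOm_le {s : Set Om} {x : Om} (hx : x ∈ s) : infOm s ≤ x :=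
  (Om.le_def).2 (csInf_le (OrderBot.bddBelow _) ⟨x, hx, rfl⟩)

theorem le_infOm {s : Set Om} (hne : s.Nonempty) {b : Om} (hb : ∀ x ∈ s, b ≤ x) :
    b ≤ infOm s :=
  (Om.le_def).2 (le_csInf (hne.image _) (by rintro _ ⟨y, hy, rfl⟩; exact (Om.le_def).1 (hb y hy)))

/-! ### `Le` lemmas -/

theorem le_refl_El : ∀ (σ : Ty) (x : El σ), Le σ x x
  | .base, x => le_refl x
  | .arrow _ τ, x => fun y => le_refl_El τ (x y)

theorem le_trans_El : ∀ (σ : Ty) {x y z : El σ}, Le σ x y → Le σ y z → Le σ x z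
  | .base, _, _, _, h1, h2 => le_trans h1 h2
  | .arrow _ τ, _, _, _, h1, h2 => fun w => le_trans_El τ (h1 w) (h2 w)

theorem le_supEl : ∀ (σ : Ty) (s : Set (El σ)), s.Countable → ∀ x ∈ s, Le σ x (supEl σ s)
  | .base, s, hs, x, hx => le_supOm hs hx
  | .arrow ρ τ, s, hs, x, hx => fun y =>
      le_supEl τ ((fun f : El (.arrow ρ τ) => f y) '' s) (hs.image _) (x y) ⟨x, hx, rfl⟩

theorem supEl_le : ∀ (σ : Ty) (s : Set (El σ)) (b : El σ),
    (∀ x ∈ s, Le σ x b) → Le σ (supEl σ s) b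
  | .base, _, _, hb => supOm_le hb
  | .arrow ρ τ, s, b, hb => fun y =>
      supEl_le τ ((fun f : El (.arrow ρ τ) => f y) '' s) (b y)
        (by rintro _ ⟨g, hg, rfl⟩; exact hb g hg y)

theorem infEl_le : ∀ (σ : Ty) (s : Set (El σ)), ∀ x ∈ s, Le σ (infEl σ s) x
  | .base, _, x, hx => infOm_le hx
  | .arrow ρ τ, s, x, hx => fun y =>
      infEl_le τ ((fun f : El (.arrow ρ τ) => f y) '' s) (x y) ⟨x, hx, rfl⟩

theorem le_infEl : ∀ (σ : Ty) (s : Set (El σ)) (b : El σ), s.Nonempty →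
    (∀ x ∈ s, Le σ b x) → Le σ b (infEl σ s)
  | .base, _, _, hne, hb => le_infOm hne hb
  | .arrow ρ τ, s, b, hne, hb => fun y =>
      le_infEl τ ((fun f : El (.arrow ρ τ) => f y) '' s) (b y) (hne.image _)
        (by rintro _ ⟨g, hg, rfl⟩; exact hb g hg y)

/-! ### unfolding `Hp`/`HpLe` -/

theorem hpLe_arrow {σ : Ty} {f g : El (.arrow σ σ)} :
    HpLe (.arrow σ σ) f g ↔ ∀ x, Hp σ x → HpLe σ (f x) (g x) := by
  simp [HpLe, HPaux, Hp]

theorem hpLe_arrow_ne {ρ τ : Ty} (h : ρ ≠ τ) {f g : El (.arrow ρ τ)} :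
    HpLe (.arrow ρ τ) f g ↔ Le (.arrow ρ τ) f g := by
  simp [HpLe, HPaux, h]

theorem hp_arrow {σ : Ty} {f : El (.arrow σ σ)} :
    Hp (.arrow σ σ) f ↔
      (∀ x, Hp σ x → Hp σ (f x)) ∧ (∀ x, Hp σ x → HpLe σ x (f x)) ∧
      (∀ x y, Hp σ x → Hp σ y → HpLe σ x y → HpLe σ (f x) (f y)) := by
  simp [Hp, HPaux, HpLe]

theorem hp_arrow_ne {ρ τ : Ty} (h : ρ ≠ τ) (f : El (.arrow ρ τ)) : Hp (.arrow ρ τ) f := by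
  simp [Hp, HPaux, h]

theorem le_imp_hpLe : ∀ (σ : Ty) {x y : El σ}, Le σ x y → HpLe σ x y := by
  intro σ
  induction σ with
  | base => exact fun h => h
  | arrow ρ τ ihρ ihτ =>
    intro x y h
    by_cases hρτ : ρ = τ
    · subst hρτ
      rw [hpLe_arrow]
      exact fun z _ => ihτ (h z)
    · rw [hpLe_arrow_ne hρτ]
      exact h

theorem hpLe_refl (σ : Ty) (x : El σ) : HpLe σ x x := le_imp_hpLe σ (le_refl_El σ x)

theorem hpLe_trans : ∀ (σ : Ty) {x y z : El σ}, HpLe σ x y → HpLe σ y z → HpLe σ x z := by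
  intro σ
  induction σ with
  | base => exact fun h1 h2 => le_trans h1 h2
  | arrow ρ τ ihρ ihτ =>
    intro x y z h1 h2
    by_cases hρτ : ρ = τ
    · subst hρτ
      rw [hpLe_arrow] at *
      exact fun w hw => ihτ (h1 w hw) (h2 w hw)
    · rw [hpLe_arrow_ne hρτ] at *
      exact le_trans_El _ h1 h2

theorem hpLe_supEl (σ : Ty) {s : Set (El σ)} (hs : s.Countable) {x : El σ} (hx : x ∈ s) :
    HpLe σ x (supEl σ s) := le_imp_hpLe σ (le_supEl σ s hs x hx)

theorem infEl_hpLe (σ : Ty) {s : Set (El σ)} {x : El σ} (hx : x ∈ s) :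
    HpLe σ (infEl σ s) x := le_imp_hpLe σ (infEl_le σ s x hx)

theorem supEl_hpLe : ∀ (σ : Ty) (s : Set (El σ)) (b : El σ),
    (∀ x ∈ s, HpLe σ x b) → HpLe σ (supEl σ s) b := by
  intro σ
  induction σ with
  | base => exact fun s b hb => supOm_le hb
  | arrow ρ τ ihρ ihτ =>
    intro s b hb
    by_cases hρτ : ρ = τ
    · subst hρτ
      rw [hpLe_arrow]
      intro y hy
      exact ihτ ((fun f : El (.arrow ρ ρ) => f y) '' s) (b y)
        (by rintro _ ⟨g, hg, rfl⟩; exact (hpLe_arrow.1 (hb g hg)) y hy)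
    · rw [hpLe_arrow_ne hρτ]
      exact supEl_le _ s b fun x hx => (hpLe_arrow_ne hρτ).1 (hb x hx)

theorem hpLe_infEl : ∀ (σ : Ty) (s : Set (El σ)) (b : El σ), s.Nonempty →
    (∀ x ∈ s, HpLe σ b x) → HpLe σ b (infEl σ s) := by
  intro σ
  induction σ with
  | base => exact fun s b hne hb => le_infOm hne hb
  | arrow ρ τ ihρ ihτ =>
    intro s b hne hb
    by_cases hρτ : ρ = τ
    · subst hρτ
      rw [hpLe_arrow]
      intro y hy
      exact ihτ ((fun f : El (.arrow ρ ρ) => f y) '' s) (b y) (hne.image _)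
        (by rintro _ ⟨g, hg, rfl⟩; exact (hpLe_arrow.1 (hb g hg)) y hy)
    · rw [hpLe_arrow_ne hρτ]
      exact le_infEl _ s b hne fun x hx => (hpLe_arrow_ne hρτ).1 (hb x hx)

theorem hp_supEl : ∀ (σ : Ty) (s : Set (El σ)), s.Countable → s.Nonempty →
    (∀ x ∈ s, Hp σ x) → Hp σ (supEl σ s) := by
  intro σ
  induction σ with
  | base => exact fun _ _ _ _ => trivial
  | arrow ρ τ ihρ ihτ =>
    intro s hs hne hhp
    by_cases hρτ : ρ = τ
    · subst hρτ
      rw [hp_arrow]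
      refine ⟨?_, ?_, ?_⟩
      · intro x hx
        exact ihτ _ (hs.image _) (hne.image _)
          (by rintro _ ⟨g, hg, rfl⟩; exact (hp_arrow.1 (hhp g hg)).1 x hx)
      · intro x hx
        obtain ⟨g, hg⟩ := hne
        exact hpLe_trans ρ ((hp_arrow.1 (hhp g hg)).2.1 x hx)
          (hpLe_supEl ρ (hs.image _) ⟨g, hg, rfl⟩)
      · intro x y hx hy hxy
        apply supEl_hpLe ρ
        rintro _ ⟨g, hg, rfl⟩
        exact hpLe_trans ρ ((hp_arrow.1 (hhp g hg)).2.2 x y hx hy hxy)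
          (hpLe_supEl ρ (hs.image _) ⟨g, hg, rfl⟩)
    · exact hp_arrow_ne hρτ _

theorem hp_infEl : ∀ (σ : Ty) (s : Set (El σ)), s.Nonempty →
    (∀ x ∈ s, Hp σ x) → Hp σ (infEl σ s) := by
  intro σ
  induction σ with
  | base => exact fun _ _ _ => trivial
  | arrow ρ τ ihρ ihτ =>
    intro s hne hhp
    by_cases hρτ : ρ = τ
    · subst hρτ
      rw [hp_arrow]
      refine ⟨?_, ?_, ?_⟩
      · intro x hx
        exact ihτ _ (hne.image _)
          (by rintro _ ⟨g, hg, rfl⟩; exact (hp_arrow.1 (hhp g hg)).1 x hx)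
      · intro x hx
        apply hpLe_infEl ρ _ _ (hne.image _)
        rintro _ ⟨g, hg, rfl⟩
        exact (hp_arrow.1 (hhp g hg)).2.1 x hx
      · intro x y hx hy hxy
        apply hpLe_infEl ρ _ _ (hne.image _)
        rintro _ ⟨g, hg, rfl⟩
        exact hpLe_trans ρ (infEl_hpLe ρ ⟨g, hg, rfl⟩)
          ((hp_arrow.1 (hhp g hg)).2.2 x y hx hy hxy)
    · exact hp_arrow_ne hρτ _

/-! ### `Iter` unfolding -/

theorem Iter_zero (σ : Ty) (f : El σ → El σ) (x : El σ) : Iter σ 0 f x = x := by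
  rw [Iter, Ordinal.limitRecOn_zero]

theorem Iter_succ (σ : Ty) (α : Ordinal) (f : El σ → El σ) (x : El σ) :
    Iter σ (α + 1) f x = f (Iter σ α f x) := by
  rw [Iter, Ordinal.add_one_eq_succ, Ordinal.limitRecOn_succ]
  rfl

theorem Iter_limit (σ : Ty) {α : Ordinal} (h : Order.IsSuccLimit α) (f : El σ → El σ) (x : El σ) :
    Iter σ α f x = limsupEl σ α (fun ξ _ => Iter σ ξ f x) := by
  rw [Iter, Ordinal.limitRecOn_limit _ _ _ _ h]
  rfl

theorem seg_image_countable (σ : Ty) {ζ : Ordinal} (hζ : ζ < ω₁) (γ : Ordinal)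
    (c : Ordinal → El σ) :
    {z | ∃ ξ, ∃ _ : ξ < ζ, γ ≤ ξ ∧ z = c ξ}.Countable := by
  have : {z | ∃ ξ, ∃ _ : ξ < ζ, γ ≤ ξ ∧ z = c ξ} = c '' {ξ | γ ≤ ξ ∧ ξ < ζ} := by
    ext z
    constructor
    · rintro ⟨ξ, h1, h2, rfl⟩; exact ⟨ξ, ⟨h2, h1⟩, rfl⟩
    · rintro ⟨ξ, ⟨h2, h1⟩, rfl⟩; exact ⟨ξ, h1, h2, rfl⟩
  rw [this]
  exact (countable_seg γ hζ).image c

theorem iter_main (σ : Ty) (f : El σ → El σ) (hf : Hp (.arrow σ σ) f) :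
    ∀ α : Ordinal, α < ω₁ →
      (∀ x, Hp σ x → Hp σ (Iter σ α f x)) ∧
      (∀ β, β ≤ α → ∀ x, Hp σ x → HpLe σ (Iter σ β f x) (Iter σ α f x)) := by
  intro α
  induction α using Ordinal.limitRecOn with
  | zero =>
    intro _
    refine ⟨fun x hx => by rw [Iter_zero]; exact hx, fun β hβ x hx => ?_⟩
    rw [nonpos_iff_eq_zero] at hβ
    subst hβ
    exact hpLe_refl σ _
  | add_one α IH =>
    intro hα1
    have hlt : α < Order.succ α := Order.lt_succ α
    rw [← Ordinal.add_one_eq_succ] at hlt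
    have hα : α < ω₁ := hlt.trans hα1
    obtain ⟨IH1, IH2⟩ := IH hα
    have hfc := hp_arrow.1 hf
    refine ⟨?_, ?_⟩
    · intro x hx
      rw [Iter_succ]
      exact hfc.1 _ (IH1 x hx)
    · intro β hβ x hx
      rcases eq_or_lt_of_le hβ with rfl | h
      · exact hpLe_refl σ _
      · rw [Iter_succ]
        rw [Ordinal.add_one_eq_succ, Order.lt_succ_iff] at h
        exact hpLe_trans σ (IH2 β h x hx) (hfc.2.1 _ (IH1 x hx))
  | limit α hlim IH =>
    intro hα
    have hsub : ∀ ξ, ξ < α → ξ < ω₁ := fun ξ h => h.trans hα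
    have hTne : ∀ γ, γ < α → ∀ x : El σ,
        ({z | ∃ ξ, ∃ _ : ξ < α, γ ≤ ξ ∧ z = Iter σ ξ f x} : Set (El σ)).Nonempty :=
      fun γ hγ x => ⟨Iter σ γ f x, γ, hγ, le_refl γ, rfl⟩
    have hAne : ∀ x : El σ,
        ({y | ∃ γ, ∃ _ : γ < α, y =
          supEl σ {z | ∃ ξ, ∃ _ : ξ < α, γ ≤ ξ ∧ z = Iter σ ξ f x}} : Set (El σ)).Nonempty :=
      fun x => ⟨_, 0, hlim.pos, rfl⟩
    refine ⟨?_, ?_⟩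
    · intro x hx
      rw [Iter_limit σ hlim]
      apply hp_infEl σ _ (hAne x)
      rintro _ ⟨γ, hγ, rfl⟩
      apply hp_supEl σ _ (seg_image_countable σ hα γ _) (hTne γ hγ x)
      rintro _ ⟨ξ, hξ, _, rfl⟩
      exact (IH ξ hξ (hsub ξ hξ)).1 x hx
    · intro β hβ x hx
      rcases eq_or_lt_of_le hβ with rfl | h
      · exact hpLe_refl σ _
      · rw [Iter_limit σ hlim]
        apply hpLe_infEl σ _ _ (hAne x)
        rintro _ ⟨γ, hγ, rfl⟩
        have hmax : max γ β < α := max_lt hγ h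
        refine hpLe_trans σ ((IH _ hmax (hsub _ hmax)).2 β (le_max_right γ β) x hx) ?_
        exact hpLe_supEl σ (seg_image_countable σ hα γ _)
          ⟨max γ β, hmax, le_max_left γ β, rfl⟩

theorem iter_le_sup (σ : Ty) (f : El σ → El σ) (hf : Hp (.arrow σ σ) f)
    {x : El σ} (hx : Hp σ x) {ζ : Ordinal} (hζ : ζ < ω₁)
    (a : Ordinal → Ordinal) (ha : ∀ ξ, ξ < ζ → a ξ < ω₁)
    {γ : Ordinal} (hγ : γ < ζ) {β : Ordinal} (hβω : β < ω₁)
    (hβ : β ≤ sSup (a '' {η | γ ≤ η ∧ η < ζ})) :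
    HpLe σ (Iter σ β f x)
      (supEl σ {z | ∃ ξ, ∃ _ : ξ < ζ, γ ≤ ξ ∧ z = Iter σ (a ξ) f x}) := by
  have hTcnt : ({z | ∃ ξ, ∃ _ : ξ < ζ, γ ≤ ξ ∧ z = Iter σ (a ξ) f x} : Set (El σ)).Countable :=
    seg_image_countable σ hζ γ (fun ξ => Iter σ (a ξ) f x)
  by_cases hcase : ∃ η, (γ ≤ η ∧ η < ζ) ∧ β ≤ a η
  · obtain ⟨η, ⟨hγη, hηζ⟩, hle⟩ := hcase
    exact hpLe_trans σ ((iter_main σ f hf (a η) (ha η hηζ)).2 β hle x hx)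
      (hpLe_supEl σ hTcnt ⟨η, hηζ, hγη, rfl⟩)
  · push_neg at hcase
    have hne : (a '' {η | γ ≤ η ∧ η < ζ}).Nonempty := ⟨a γ, γ, ⟨le_refl γ, hγ⟩, rfl⟩
    have hbdd : BddAbove (a '' {η | γ ≤ η ∧ η < ζ}) :=
      ⟨ω₁, by rintro _ ⟨η, hη, rfl⟩; exact (ha η hη.2).le⟩
    have hδβ : sSup (a '' {η | γ ≤ η ∧ η < ζ}) ≤ β :=
      csSup_le hne (by rintro _ ⟨η, hη, rfl⟩; exact (hcase η hη).le)
    have hβδ : β = sSup (a '' {η | γ ≤ η ∧ η < ζ}) := le_antisymm hβ hδβ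
    have hβ0 : β ≠ 0 := by
      intro h0
      have := hcase γ ⟨le_refl γ, hγ⟩
      rw [h0] at this
      exact absurd this (not_lt_of_ge zero_le)
    have hβlim : Order.IsSuccLimit β := by
      refine Ordinal.isSuccLimit_iff.2 ⟨hβ0, Order.isSuccPrelimit_iff_succ_lt.2 fun s hs => ?_⟩
      rw [hβδ] at hs
      obtain ⟨_, ⟨η, hη, rfl⟩, hlt⟩ := (lt_csSup_iff hbdd hne).1 hs
      exact lt_of_le_of_lt (Order.succ_le_of_lt hlt) (hcase η hη)
    rw [Iter_limit σ hβlim]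
    have h1 : HpLe σ (limsupEl σ β (fun ξ _ => Iter σ ξ f x))
        (supEl σ {z | ∃ η, ∃ _ : η < β, 0 ≤ η ∧ z = Iter σ η f x}) :=
      infEl_hpLe σ ⟨0, hβlim.pos, rfl⟩
    refine hpLe_trans σ h1 ?_
    apply supEl_hpLe σ
    rintro _ ⟨η, hη, -, rfl⟩
    rw [hβδ] at hη
    obtain ⟨_, ⟨η', hη', rfl⟩, hlt⟩ := (lt_csSup_iff hbdd hne).1 hη
    exact hpLe_trans σ ((iter_main σ f hf (a η') (ha η' hη'.2)).2 η hlt.le x hx)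
      (hpLe_supEl σ hTcnt ⟨η', hη'.2, hη'.1, rfl⟩)

theorem eval_image {ρ τ : Ty} {ζ : Ordinal} (p : Ordinal → Prop)
    (G : ∀ ξ : Ordinal, ξ < ζ → El (.arrow ρ τ)) (x : El ρ) :
    (fun g : El (.arrow ρ τ) => g x) '' {z | ∃ ξ, ∃ h : ξ < ζ, p ξ ∧ z = G ξ h} =
      {z | ∃ ξ, ∃ h : ξ < ζ, p ξ ∧ z = G ξ h x} := by
  ext z
  constructor
  · rintro ⟨_, ⟨ξ, h, hp, rfl⟩, rfl⟩; exact ⟨ξ, h, hp, rfl⟩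
  · rintro ⟨ξ, h, hp, rfl⟩; exact ⟨G ξ h, ⟨ξ, h, hp, rfl⟩, rfl⟩

theorem eval_image' {ρ τ : Ty} {ζ : Ordinal}
    (G : ∀ γ : Ordinal, γ < ζ → El (.arrow ρ τ)) (x : El ρ) :
    (fun g : El (.arrow ρ τ) => g x) '' {y | ∃ γ, ∃ h : γ < ζ, y = G γ h} =
      {y | ∃ γ, ∃ h : γ < ζ, y = G γ h x} := by
  ext y
  constructor
  · rintro ⟨_, ⟨γ, h, rfl⟩, rfl⟩; exact ⟨γ, h, rfl⟩
  · rintro ⟨γ, h, rfl⟩; exact ⟨G γ h, ⟨γ, h, rfl⟩, rfl⟩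

theorem limsupEl_apply {ρ τ : Ty} {ζ : Ordinal}
    (F : ∀ ξ : Ordinal, ξ < ζ → El (.arrow ρ τ)) (x : El ρ) :
    limsupEl (.arrow ρ τ) ζ F x = limsupEl τ ζ (fun ξ h => F ξ h x) := by
  show infEl τ ((fun g : El (.arrow ρ τ) => g x) '' _) = infEl τ _
  rw [eval_image' (fun γ (_ : γ < ζ) =>
    supEl (.arrow ρ τ) {z | ∃ ξ, ∃ h : ξ < ζ, γ ≤ ξ ∧ z = F ξ h}) x]
  congr 1
  ext y
  refine exists_congr fun γ => ?_
  refine exists_congr fun hγ => ?_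
  rw [show supEl (.arrow ρ τ) {z | ∃ ξ, ∃ h : ξ < ζ, γ ≤ ξ ∧ z = F ξ h} x
      = supEl τ {z | ∃ ξ, ∃ h : ξ < ζ, γ ≤ ξ ∧ z = F ξ h x} from by
    show supEl τ ((fun g : El (.arrow ρ τ) => g x) '' _) = _
    rw [eval_image (fun ξ => γ ≤ ξ) F x]]

theorem core (σ : Ty) {ζ : Ordinal} (hζ1 : 1 ≤ ζ) (hζ : ζ < ω₁)
    (a : Ordinal → Ordinal) (ha : ∀ ξ, ξ < ζ → a ξ < ω₁)
    {μ : Ordinal} (hμ : μ < ζ)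
    (hsup : oLimsup ζ a = sSup (a '' {ξ | μ ≤ ξ ∧ ξ < ζ}))
    (f : El σ → El σ) (hf : Hp (.arrow σ σ) f) (x : El σ) (hx : Hp σ x) :
    HpEq σ (limsupEl σ ζ (fun ξ _ => Iter σ (a ξ) f x))
      (supEl σ {z | ∃ ξ, ∃ _ : ξ < ζ, μ ≤ ξ ∧ z = Iter σ (a ξ) f x}) := by
  have hζ0 : (0 : Ordinal) < ζ := lt_of_lt_of_le zero_lt_one hζ1
  rw [show limsupEl σ ζ (fun ξ _ => Iter σ (a ξ) f x)
      = infEl σ {y | ∃ γ, ∃ _ : γ < ζ,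
          y = supEl σ {z | ∃ ξ, ∃ _ : ξ < ζ, γ ≤ ξ ∧ z = Iter σ (a ξ) f x}} from rfl]
  constructor
  · exact le_imp_hpLe σ (infEl_le σ
      {y | ∃ γ, ∃ _ : γ < ζ,
        y = supEl σ {z | ∃ ξ, ∃ _ : ξ < ζ, γ ≤ ξ ∧ z = Iter σ (a ξ) f x}}
      (supEl σ {z | ∃ ξ, ∃ _ : ξ < ζ, μ ≤ ξ ∧ z = Iter σ (a ξ) f x}) ⟨μ, hμ, rfl⟩)
  · apply hpLe_infEl σ
      {y | ∃ γ, ∃ _ : γ < ζ,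
        y = supEl σ {z | ∃ ξ, ∃ _ : ξ < ζ, γ ≤ ξ ∧ z = Iter σ (a ξ) f x}}
      (supEl σ {z | ∃ ξ, ∃ _ : ξ < ζ, μ ≤ ξ ∧ z = Iter σ (a ξ) f x})
      ⟨_, 0, hζ0, rfl⟩
    rintro _ ⟨γ, hγ, rfl⟩
    apply supEl_hpLe σ
    rintro _ ⟨ξ, hξ, hμξ, rfl⟩
    apply iter_le_sup σ f hf hx hζ a ha hγ (ha ξ hξ)
    have h1 : a ξ ≤ sSup (a '' {η | μ ≤ η ∧ η < ζ}) :=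
      le_csSup ⟨ω₁, by rintro _ ⟨η, hη, rfl⟩; exact (ha η hη.2).le⟩ ⟨ξ, ⟨hμξ, hξ⟩, rfl⟩
    rw [← hsup] at h1
    exact h1.trans (csInf_le (OrderBot.bddBelow _) ⟨γ, hγ, rfl⟩)

/-- For any finite type `σ` and any sequence of countable ordinals
`(α_ξ)_{ξ<ζ}` with `ζ ≥ 1` countable, if `μ < ζ` is such that
`limsup_{ξ→ζ} α_ξ = sup_{μ≤ξ<ζ} α_ξ`, then
`limsup_{ξ→ζ} Iter_{α_ξ}^σ =hp sup_{μ≤ξ<ζ} Iter_{α_ξ}^σ`. -/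
theorem limsup_iter_hpEq_sup_iter (σ : Ty) (ζ : Ordinal) (hζ1 : 1 ≤ ζ) (hζ : ζ < ω₁)
    (a : Ordinal → Ordinal) (ha : ∀ ξ, ξ < ζ → a ξ < ω₁)
    (μ : Ordinal) (hμ : μ < ζ)
    (hsup : oLimsup ζ a = sSup (a '' {ξ | μ ≤ ξ ∧ ξ < ζ})) :
    HpEq (.arrow (.arrow σ σ) (.arrow σ σ))
      (limsupEl (.arrow (.arrow σ σ) (.arrow σ σ)) ζ (fun ξ _ => Iter σ (a ξ)))
      (supEl (.arrow (.arrow σ σ) (.arrow σ σ))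
        {g | ∃ ξ, ∃ _ : ξ < ζ, μ ≤ ξ ∧ g = Iter σ (a ξ)}) := by
  have key : ∀ f : El (.arrow σ σ), Hp (.arrow σ σ) f → ∀ x : El σ, Hp σ x →
      limsupEl (.arrow (.arrow σ σ) (.arrow σ σ)) ζ (fun ξ _ => Iter σ (a ξ)) f x
        = limsupEl σ ζ (fun ξ _ => Iter σ (a ξ) f x) ∧
      supEl (.arrow (.arrow σ σ) (.arrow σ σ))
          {g | ∃ ξ, ∃ _ : ξ < ζ, μ ≤ ξ ∧ g = Iter σ (a ξ)} f x
        = supEl σ {z | ∃ ξ, ∃ _ : ξ < ζ, μ ≤ ξ ∧ z = Iter σ (a ξ) f x} := by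
    intro f _ x _
    constructor
    · rw [limsupEl_apply (ρ := .arrow σ σ) (τ := .arrow σ σ)
          (fun ξ (_ : ξ < ζ) => Iter σ (a ξ)) f,
        limsupEl_apply (ρ := σ) (τ := σ) (fun ξ (_ : ξ < ζ) => Iter σ (a ξ) f) x]
    · show supEl σ ((fun g : El (.arrow σ σ) => g x) ''
          ((fun g : El (.arrow (.arrow σ σ) (.arrow σ σ)) => g f) ''
            {g | ∃ ξ, ∃ _ : ξ < ζ, μ ≤ ξ ∧ g = Iter σ (a ξ)})) = _
      rw [eval_image (ρ := .arrow σ σ) (τ := .arrow σ σ) (fun ξ => μ ≤ ξ)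
          (fun ξ (_ : ξ < ζ) => Iter σ (a ξ)) f,
        eval_image (ρ := σ) (τ := σ) (fun ξ => μ ≤ ξ)
          (fun ξ (_ : ξ < ζ) => Iter σ (a ξ) f) x]
  constructor
  · rw [hpLe_arrow]
    intro f hf
    rw [hpLe_arrow]
    intro x hx
    rw [(key f hf x hx).1, (key f hf x hx).2]
    exact (core σ hζ1 hζ a ha hμ hsup f hf x hx).1
  · rw [hpLe_arrow]
    intro f hf
    rw [hpLe_arrow]
    intro x hx
    rw [(key f hf x hx).1, (key f hf x hx).2]
    exact (core σ hζ1 hζ a ha hμ hsup f hf x hx).2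


end IterOrd
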